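/- Let {T^{ε,m}} and {T^ε} be families of maps from W to a metric space (X,d), with {T^{ε,m}} exponentially good approximations of {T^ε} under a monotone subadditive set function Cap, and suppose each {T^{ε,m}} satisfies the Cap-LDP with good rate function I_m. Then for every x ∈ X, −(1/q)·sup_{λ>0} liminf_{m→∞} inf_{y∈B(x,λ)} I_m(y) = inf_{λ>0} limsup_{ε→0} ε² log Cap{w : T^ε(w) ∈ B(x,λ)} = inf_{λ>0} liminf_{ε→0} ε² log Cap{w : T^ε(w) ∈ B(x,λ)}. -/

import Mathlib

open Filter Metric Set Topology
open scoped ENNReal NNReal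

namespace CapLDP

noncomputable def tE (x : EReal) : ℝ≥0∞ := if x = ⊤ then ⊤ else ENNReal.ofReal x.toReal

lemma gc_tE : GaloisConnection tE (fun a : ℝ≥0∞ => (a : EReal)) := by
  intro x a
  induction x using EReal.rec with
  | bot => simp [tE]
  | top =>
    simp [tE, top_le_iff, EReal.coe_ennreal_eq_top_iff]
  | coe r =>
    rw [tE, if_neg (EReal.coe_ne_top r), EReal.toReal_coe]
    cases a with
    | top => simp
    | coe n =>
      rw [ENNReal.ofReal_le_iff_le_toReal (by simp)]
      simp only [ENNReal.coe_toReal, EReal.coe_nnreal_eq_coe_real]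
      constructor
      · intro h
        exact_mod_cast h
      · intro h
        exact_mod_cast h

lemma coe_ennreal_iInf {ι : Sort*} (a : ι → ℝ≥0∞) :
    ((⨅ i, a i : ℝ≥0∞) : EReal) = ⨅ i, (a i : EReal) :=
  gc_tE.u_iInf

lemma coe_ennreal_iSup {ι : Sort*} [Nonempty ι] (a : ι → ℝ≥0∞) :
    ((⨆ i, a i : ℝ≥0∞) : EReal) = ⨆ i, (a i : EReal) := by
  refine le_antisymm ?_ (iSup_le fun i => EReal.coe_ennreal_le_coe_ennreal_iff.2 (le_iSup a i))
  refine le_of_forall_gt_imp_ge_of_dense fun b hb => ?_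
  -- b > ⨆ i, ↑(a i); show ↑(⨆ a) ≤ b
  obtain ⟨i₀⟩ := ‹Nonempty ι›
  have hb0 : (0 : EReal) < b := lt_of_le_of_lt (le_trans (EReal.coe_ennreal_nonneg _) (le_iSup (fun i => (a i : EReal)) i₀)) hb
  induction b using EReal.rec with
  | bot => exact absurd hb0 (by simp)
  | top => exact le_top
  | coe r =>
    have hr : (0:ℝ) < r := by exact_mod_cast hb0
    have hcoe : ((ENNReal.ofReal r : ℝ≥0∞) : EReal) = (r : EReal) := by
      rw [EReal.coe_ennreal_ofReal, max_eq_left hr.le]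
    have : ∀ i, a i ≤ ENNReal.ofReal r := by
      intro i
      have : (a i : EReal) < ((ENNReal.ofReal r : ℝ≥0∞) : EReal) := by
        rw [hcoe]; exact lt_of_le_of_lt (le_iSup (fun i => (a i : EReal)) i) hb
      exact (EReal.coe_ennreal_lt_coe_ennreal_iff.1 this).le
    calc ((⨆ i, a i : ℝ≥0∞) : EReal) ≤ ((ENNReal.ofReal r : ℝ≥0∞) : EReal) :=
          EReal.coe_ennreal_le_coe_ennreal_iff.2 (iSup_le this)
      _ = (r : EReal) := hcoe


/-- multiplication by a positive real as an order isomorphism of `EReal` -/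
noncomputable def mulIso (c : ℝ) (hc : 0 < c) : EReal ≃o EReal where
  toFun x := (c : EReal) * x
  invFun x := ((c⁻¹ : ℝ) : EReal) * x
  left_inv x := by
    show ((c⁻¹ : ℝ) : EReal) * ((c : EReal) * x) = x
    rw [← mul_assoc, ← EReal.coe_mul, inv_mul_cancel₀ hc.ne', EReal.coe_one, one_mul]
  right_inv x := by
    show (c : EReal) * (((c⁻¹ : ℝ) : EReal) * x) = x
    rw [← mul_assoc, ← EReal.coe_mul, mul_inv_cancel₀ hc.ne', EReal.coe_one, one_mul]
  map_rel_iff' := by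
    intro x y
    show (c : EReal) * x ≤ (c : EReal) * y ↔ x ≤ y
    constructor
    · intro h
      have := mul_le_mul_of_nonneg_left h (by exact_mod_cast inv_nonneg.2 hc.le :
        (0 : EReal) ≤ ((c⁻¹ : ℝ) : EReal))
      rwa [← mul_assoc, ← mul_assoc, ← EReal.coe_mul, inv_mul_cancel₀ hc.ne',
        EReal.coe_one, one_mul, one_mul] at this
    · intro h
      exact mul_le_mul_of_nonneg_left h (by exact_mod_cast hc.le)

lemma neg_iInf {ι : Sort*} (g : ι → EReal) : -(⨅ i, g i) = ⨆ i, -(g i) := by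
  apply le_antisymm
  · rw [EReal.neg_le]
    exact le_iInf fun i => EReal.neg_le.1 (le_iSup (fun i => -(g i)) i)
  · exact iSup_le fun i => EReal.neg_le_neg_iff.2 (iInf_le g i)

lemma neg_iSup {ι : Sort*} (g : ι → EReal) : -(⨆ i, g i) = ⨅ i, -(g i) := by
  rw [← neg_neg (⨅ i, -(g i))]
  congr 1
  rw [neg_iInf]
  simp


noncomputable def Fm (c : ℝ) (a : ℝ≥0∞) : EReal := -((c : EReal) * (a : EReal))

lemma Fm_anti (c : ℝ) (hc : 0 ≤ c) {a b : ℝ≥0∞} (h : a ≤ b) : Fm c b ≤ Fm c a :=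
  EReal.neg_le_neg_iff.2 (mul_le_mul_of_nonneg_left
    (EReal.coe_ennreal_le_coe_ennreal_iff.2 h) (by exact_mod_cast hc))

lemma Fm_iInf (c : ℝ) (hc : 0 < c) {ι : Sort*} (a : ι → ℝ≥0∞) :
    Fm c (⨅ i, a i) = ⨆ i, Fm c (a i) := by
  unfold Fm
  rw [coe_ennreal_iInf]
  have : (c : EReal) * (⨅ i, (a i : EReal)) = ⨅ i, (c : EReal) * (a i : EReal) :=
    (mulIso c hc).map_iInf _
  rw [this, neg_iInf]

lemma Fm_iSup (c : ℝ) (hc : 0 < c) {ι : Sort*} [Nonempty ι] (a : ι → ℝ≥0∞) :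
    Fm c (⨆ i, a i) = ⨅ i, Fm c (a i) := by
  unfold Fm
  rw [coe_ennreal_iSup]
  have : (c : EReal) * (⨆ i, (a i : EReal)) = ⨆ i, (c : EReal) * (a i : EReal) :=
    (mulIso c hc).map_iSup _
  rw [this, neg_iSup]

lemma Fm_liminf (c : ℝ) (hc : 0 < c) (a : ℕ → ℝ≥0∞) :
    Fm c (liminf a atTop) = limsup (fun m => Fm c (a m)) atTop := by
  rw [liminf_eq_iSup_iInf_of_nat, limsup_eq_iInf_iSup_of_nat, Fm_iSup c hc]
  refine iInf_congr fun n => ?_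
  rw [Fm_iInf c hc]
  exact iSup_congr fun i => Fm_iInf c hc _

lemma mul_sup' (c : EReal) (hc : 0 ≤ c) (u v : EReal) : c * (u ⊔ v) = (c * u) ⊔ (c * v) := by
  rcases le_total u v with h | h
  · rw [sup_eq_right.2 h, sup_eq_right.2 (mul_le_mul_of_nonneg_left h hc)]
  · rw [sup_eq_left.2 h, sup_eq_left.2 (mul_le_mul_of_nonneg_left h hc)]

lemma mul_add' (c r : ℝ) (hc : 0 ≤ c) (u : EReal) :
    (c : EReal) * ((r : EReal) + u) = ((c * r : ℝ) : EReal) + (c : EReal) * u := by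
  rcases hc.eq_or_lt with rfl | hc
  · simp
  · induction u using EReal.rec with
    | bot =>
      rw [EReal.add_bot, EReal.mul_bot_of_pos (by exact_mod_cast hc), EReal.add_bot]
    | top =>
      rw [EReal.add_top_of_ne_bot (EReal.coe_ne_bot r),
        EReal.mul_top_of_pos (by exact_mod_cast hc),
        EReal.add_top_of_ne_bot (EReal.coe_ne_bot _)]
    | coe s =>
      norm_cast
      ring

lemma liminf_sup_le {α : Type*} {l : Filter α} [l.NeBot] (u v : α → EReal) :
    liminf (fun x => u x ⊔ v x) l ≤ liminf u l ⊔ limsup v l := by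
  by_contra hcon
  push_neg at hcon
  obtain ⟨b, hab, hbl⟩ := exists_between hcon
  have hu : ∃ᶠ x in l, u x < b :=
    frequently_lt_of_liminf_lt (by isBoundedDefault) (lt_of_le_of_lt le_sup_left hab)
  have hv : ∀ᶠ x in l, v x < b :=
    eventually_lt_of_limsup_lt (lt_of_le_of_lt le_sup_right hab)
  have : ∃ᶠ x in l, u x ⊔ v x ≤ b :=
    (hu.and_eventually hv).mono fun x ⟨h1, h2⟩ => sup_le h1.le h2.le
  exact absurd (liminf_le_of_frequently_le this) (not_le.2 hbl)

lemma le_limsup_of_tendsto_bot {u v : ℕ → EReal} {a : EReal}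
    (h1 : ∀ m, a ≤ u m ⊔ v m) (h2 : Tendsto v atTop (𝓝 ⊥)) :
    a ≤ limsup u atTop := by
  by_contra hcon
  push_neg at hcon
  have hbot : (⊥ : EReal) < a := lt_of_le_of_lt bot_le hcon
  have hu : ∀ᶠ m in atTop, u m < a := eventually_lt_of_limsup_lt hcon
  have hv : ∀ᶠ m in atTop, v m < a := h2.eventually_lt_const hbot
  obtain ⟨m, hm1, hm2⟩ := (hu.and hv).exists
  exact absurd (h1 m) (not_le.2 (sup_lt_iff.2 ⟨hm1, hm2⟩))

lemma limsup_le_of_tendsto_bot {u v : ℕ → EReal} {a : EReal}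
    (h1 : ∀ m, u m ≤ a ⊔ v m) (h2 : Tendsto v atTop (𝓝 ⊥)) :
    limsup u atTop ≤ a := by
  refine le_of_forall_gt_imp_ge_of_dense fun b hb => ?_
  have hbot : (⊥ : EReal) < b := lt_of_le_of_lt bot_le hb
  have hv : ∀ᶠ m in atTop, v m < b := h2.eventually_lt_const hbot
  refine limsup_le_of_le (by isBoundedDefault) ?_
  filter_upwards [hv] with m hm
  exact (h1 m).trans (sup_le hb.le hm.le)


variable {W : Type*}

/-- `ε ↦ ε² log Cap (S ε)` -/
noncomputable def eps2log (Cap : Set W → ℝ≥0∞) (S : ℝ → Set W) : ℝ → EReal :=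
  fun ε => ((ε ^ 2 : ℝ) : EReal) * ENNReal.log (Cap (S ε))

lemma eps2log_split (Cap : Set W → ℝ≥0∞)
    (hmono : ∀ A B : Set W, A ⊆ B → Cap A ≤ Cap B)
    (hsub : ∀ A B : Set W, Cap (A ∪ B) ≤ Cap A + Cap B)
    {S Sb Sc : ℝ → Set W} (h : ∀ ε, S ε ⊆ Sb ε ∪ Sc ε) (ε : ℝ) :
    eps2log Cap S ε ≤
      ((fun ε : ℝ => ((ε ^ 2 * Real.log 2 : ℝ) : EReal)) +
        fun ε => eps2log Cap Sb ε ⊔ eps2log Cap Sc ε) ε := by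
  have h1 : Cap (S ε) ≤ 2 * (Cap (Sb ε) ⊔ Cap (Sc ε)) := by
    calc Cap (S ε) ≤ Cap (Sb ε ∪ Sc ε) := hmono _ _ (h ε)
      _ ≤ Cap (Sb ε) + Cap (Sc ε) := hsub _ _
      _ ≤ 2 * (Cap (Sb ε) ⊔ Cap (Sc ε)) := by
          rw [two_mul]; exact add_le_add le_sup_left le_sup_right
  have hl2 : ENNReal.log (2 : ℝ≥0∞) = ((Real.log 2 : ℝ) : EReal) := by
    rw [show (2 : ℝ≥0∞) = ENNReal.ofReal 2 by simp]
    exact ENNReal.log_ofReal_of_pos (by norm_num)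
  have h2 : ENNReal.log (Cap (S ε)) ≤
      ((Real.log 2 : ℝ) : EReal) + (ENNReal.log (Cap (Sb ε)) ⊔ ENNReal.log (Cap (Sc ε))) := by
    calc ENNReal.log (Cap (S ε)) ≤ ENNReal.log (2 * (Cap (Sb ε) ⊔ Cap (Sc ε))) :=
          ENNReal.log_monotone h1
      _ = _ := by rw [ENNReal.log_mul_add, ENNReal.log_monotone.map_max, hl2]
  have hε2 : (0 : ℝ) ≤ ε ^ 2 := sq_nonneg ε
  have hε2' : (0 : EReal) ≤ ((ε ^ 2 : ℝ) : EReal) := by exact_mod_cast hε2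
  calc eps2log Cap S ε ≤ ((ε ^ 2 : ℝ) : EReal) *
        (((Real.log 2 : ℝ) : EReal) + (ENNReal.log (Cap (Sb ε)) ⊔ ENNReal.log (Cap (Sc ε)))) :=
        mul_le_mul_of_nonneg_left h2 hε2'
    _ = ((ε ^ 2 * Real.log 2 : ℝ) : EReal) +
        ((ε ^ 2 : ℝ) : EReal) * (ENNReal.log (Cap (Sb ε)) ⊔ ENNReal.log (Cap (Sc ε))) :=
        mul_add' _ _ hε2 _
    _ = _ := by rw [mul_sup' _ hε2']; rfl

lemma limsup_log2_zero :
    limsup (fun ε : ℝ => ((ε ^ 2 * Real.log 2 : ℝ) : EReal)) (𝓝[>] (0:ℝ)) = 0 := by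
  have h1 : Tendsto (fun ε : ℝ => ε ^ 2 * Real.log 2) (𝓝[>] (0:ℝ)) (𝓝 0) := by
    have : Tendsto (fun ε : ℝ => ε ^ 2 * Real.log 2) (𝓝 (0:ℝ)) (𝓝 0) := by
      have h0 : Continuous (fun ε : ℝ => ε ^ 2 * Real.log 2) :=
        (continuous_pow 2).mul continuous_const
      have := h0.tendsto (0:ℝ)
      simpa using this
    exact this.mono_left nhdsWithin_le_nhds
  have h2 : Tendsto (fun ε : ℝ => ((ε ^ 2 * Real.log 2 : ℝ) : EReal)) (𝓝[>] (0:ℝ)) (𝓝 (0:EReal)) := by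
    have := (continuous_coe_real_ereal.tendsto (0:ℝ)).comp h1
    rw [EReal.coe_zero] at this; exact this
  exact h2.limsup_eq

lemma limsup_eps2log_split (Cap : Set W → ℝ≥0∞)
    (hmono : ∀ A B : Set W, A ⊆ B → Cap A ≤ Cap B)
    (hsub : ∀ A B : Set W, Cap (A ∪ B) ≤ Cap A + Cap B)
    {S Sb Sc : ℝ → Set W} (h : ∀ ε, S ε ⊆ Sb ε ∪ Sc ε) :
    limsup (eps2log Cap S) (𝓝[>] (0:ℝ)) ≤
      limsup (eps2log Cap Sb) (𝓝[>] (0:ℝ)) ⊔ limsup (eps2log Cap Sc) (𝓝[>] (0:ℝ)) := by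
  calc limsup (eps2log Cap S) (𝓝[>] (0:ℝ))
      ≤ limsup ((fun ε : ℝ => ((ε ^ 2 * Real.log 2 : ℝ) : EReal)) +
          fun ε => eps2log Cap Sb ε ⊔ eps2log Cap Sc ε) (𝓝[>] (0:ℝ)) :=
        limsup_le_limsup (Eventually.of_forall (eps2log_split Cap hmono hsub h))
    _ ≤ limsup (fun ε : ℝ => ((ε ^ 2 * Real.log 2 : ℝ) : EReal)) (𝓝[>] (0:ℝ)) +
          limsup (fun ε => eps2log Cap Sb ε ⊔ eps2log Cap Sc ε) (𝓝[>] (0:ℝ)) :=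
        EReal.limsup_add_le (.inl (by rw [limsup_log2_zero]; simp))
          (.inl (by rw [limsup_log2_zero]; simp))
    _ = limsup (fun ε => eps2log Cap Sb ε ⊔ eps2log Cap Sc ε) (𝓝[>] (0:ℝ)) := by
        rw [limsup_log2_zero, zero_add]
    _ = _ := limsup_max

lemma liminf_eps2log_split (Cap : Set W → ℝ≥0∞)
    (hmono : ∀ A B : Set W, A ⊆ B → Cap A ≤ Cap B)
    (hsub : ∀ A B : Set W, Cap (A ∪ B) ≤ Cap A + Cap B)
    {S Sb Sc : ℝ → Set W} (h : ∀ ε, S ε ⊆ Sb ε ∪ Sc ε) :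
    liminf (eps2log Cap S) (𝓝[>] (0:ℝ)) ≤
      liminf (eps2log Cap Sb) (𝓝[>] (0:ℝ)) ⊔ limsup (eps2log Cap Sc) (𝓝[>] (0:ℝ)) := by
  calc liminf (eps2log Cap S) (𝓝[>] (0:ℝ))
      ≤ liminf ((fun ε : ℝ => ((ε ^ 2 * Real.log 2 : ℝ) : EReal)) +
          fun ε => eps2log Cap Sb ε ⊔ eps2log Cap Sc ε) (𝓝[>] (0:ℝ)) :=
        liminf_le_liminf (Eventually.of_forall (eps2log_split Cap hmono hsub h))
    _ ≤ limsup (fun ε : ℝ => ((ε ^ 2 * Real.log 2 : ℝ) : EReal)) (𝓝[>] (0:ℝ)) +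
          liminf (fun ε => eps2log Cap Sb ε ⊔ eps2log Cap Sc ε) (𝓝[>] (0:ℝ)) :=
        EReal.liminf_add_le (.inl (by rw [limsup_log2_zero]; simp))
          (.inl (by rw [limsup_log2_zero]; simp))
    _ = liminf (fun ε => eps2log Cap Sb ε ⊔ eps2log Cap Sc ε) (𝓝[>] (0:ℝ)) := by
        rw [limsup_log2_zero, zero_add]
    _ ≤ _ := liminf_sup_le _ _

end CapLDP

open CapLDP

/-- Key ball identity for exponentially good approximations under a capacity:
if each `{T^{ε,m}}` satisfies the `Cap`-LDP with good rate function `Im m` and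
the `{T^{ε,m}}` are exponentially good approximations of `{Tε}`, then for
every `x`, `−(1/q)·sup_{λ>0} liminf_m inf_{B(x,λ)} Im m` equals both
`inf_{λ>0} limsup_{ε→0} ε² log Cap{Tε ∈ B(x,λ)}` and
`inf_{λ>0} liminf_{ε→0} ε² log Cap{Tε ∈ B(x,λ)}`. -/
theorem capacity_ldp_ball_identity {W X : Type*} [MetricSpace X]
    (Cap : Set W → ℝ≥0∞)
    (hmono : ∀ A B : Set W, A ⊆ B → Cap A ≤ Cap B)
    (hsub : ∀ A B : Set W, Cap (A ∪ B) ≤ Cap A + Cap B)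
    (q : ℝ) (hq : 1 < q)
    (T : ℝ → ℕ → W → X) (Te : ℝ → W → X)
    (Im : ℕ → X → ℝ≥0∞)
    (hImlsc : ∀ m, LowerSemicontinuous (Im m))
    (hImcomp : ∀ m, ∀ α : ℝ≥0, IsCompact {y : X | Im m y ≤ (α : ℝ≥0∞)})
    (hupper : ∀ m : ℕ, ∀ C : Set X, IsClosed C →
      limsup (fun ε : ℝ => ((ε ^ 2 : ℝ) : EReal) *
          ENNReal.log (Cap {w | T ε m w ∈ C})) (𝓝[>] 0)
        ≤ -(((1 / q : ℝ) : EReal) * ((⨅ y ∈ C, Im m y : ℝ≥0∞) : EReal)))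
    (hlower : ∀ m : ℕ, ∀ G : Set X, IsOpen G →
      -(((1 / q : ℝ) : EReal) * ((⨅ y ∈ G, Im m y : ℝ≥0∞) : EReal))
        ≤ liminf (fun ε : ℝ => ((ε ^ 2 : ℝ) : EReal) *
            ENNReal.log (Cap {w | T ε m w ∈ G})) (𝓝[>] 0))
    (happrox : ∀ lam : ℝ, 0 < lam →
      Tendsto (fun m : ℕ => limsup (fun ε : ℝ => ((ε ^ 2 : ℝ) : EReal) *
          ENNReal.log (Cap {w | lam < dist (T ε m w) (Te ε w)})) (𝓝[>] 0))
        atTop (𝓝 (⊥ : EReal))) :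
    ∀ x : X,
      (-(((1 / q : ℝ) : EReal) *
          ((⨆ lam ∈ Set.Ioi (0 : ℝ),
            liminf (fun m : ℕ => ⨅ y ∈ ball x lam, Im m y) atTop : ℝ≥0∞) : EReal))
        = ⨅ lam ∈ Set.Ioi (0 : ℝ),
            limsup (fun ε : ℝ => ((ε ^ 2 : ℝ) : EReal) *
              ENNReal.log (Cap {w | Te ε w ∈ ball x lam})) (𝓝[>] 0)) ∧
      (-(((1 / q : ℝ) : EReal) *
          ((⨆ lam ∈ Set.Ioi (0 : ℝ),
            liminf (fun m : ℕ => ⨅ y ∈ ball x lam, Im m y) atTop : ℝ≥0∞) : EReal))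
        = ⨅ lam ∈ Set.Ioi (0 : ℝ),
            liminf (fun ε : ℝ => ((ε ^ 2 : ℝ) : EReal) *
              ENNReal.log (Cap {w | Te ε w ∈ ball x lam})) (𝓝[>] 0)) := by
  intro x
  have hq0 : (0:ℝ) < q := lt_trans one_pos hq
  have hc : (0:ℝ) < 1/q := by positivity
  haveI hne : Nonempty (Set.Ioi (0:ℝ)) := ⟨⟨1, Set.mem_Ioi.2 one_pos⟩⟩
  have hV : (-(((1 / q : ℝ) : EReal) *
      ((⨆ lam ∈ Set.Ioi (0 : ℝ),
        liminf (fun m : ℕ => ⨅ y ∈ ball x lam, Im m y) atTop : ℝ≥0∞) : EReal)))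
      = ⨅ p : Set.Ioi (0:ℝ), limsup
          (fun m : ℕ => Fm (1/q) (⨅ y ∈ ball x p.1, Im m y)) atTop := by
    show Fm (1/q) _ = _
    rw [iSup_subtype', Fm_iSup _ hc]
    exact iInf_congr fun p => Fm_liminf _ hc _
  have hUB : ∀ lam : ℝ, 0 < lam →
      (⨅ l ∈ Set.Ioi (0:ℝ), limsup (fun ε : ℝ => ((ε ^ 2 : ℝ) : EReal) *
          ENNReal.log (Cap {w | Te ε w ∈ ball x l})) (𝓝[>] 0))
        ≤ limsup (fun m : ℕ => Fm (1/q) (⨅ y ∈ ball x lam, Im m y)) atTop := by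
    intro lam hlam
    have h3 : (0:ℝ) < lam/3 := by linarith
    refine le_trans (iInf₂_le (lam/3) (Set.mem_Ioi.2 h3)) ?_
    refine le_limsup_of_tendsto_bot
      (v := fun m => limsup (fun ε : ℝ => ((ε ^ 2 : ℝ) : EReal) *
        ENNReal.log (Cap {w | lam/3 < dist (T ε m w) (Te ε w)})) (𝓝[>] 0)) ?_
      (happrox (lam/3) h3)
    intro m
    have hincl : ∀ ε : ℝ, {w | Te ε w ∈ ball x (lam/3)} ⊆
        {w | T ε m w ∈ closedBall x (2*lam/3)} ∪ {w | lam/3 < dist (T ε m w) (Te ε w)} := by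
      intro ε w hw
      by_cases hd : lam/3 < dist (T ε m w) (Te ε w)
      · exact Or.inr hd
      · left
        push_neg at hd
        have h1 : dist (Te ε w) x < lam/3 := hw
        have h2 := dist_triangle (T ε m w) (Te ε w) x
        show dist (T ε m w) x ≤ 2*lam/3
        linarith
    have hspl := limsup_eps2log_split Cap hmono hsub hincl
    have hu1 : limsup (eps2log Cap (fun ε => {w | T ε m w ∈ closedBall x (2*lam/3)}))
        (𝓝[>] (0:ℝ)) ≤ Fm (1/q) (⨅ y ∈ ball x lam, Im m y) := by
      refine le_trans (hupper m (closedBall x (2*lam/3)) isClosed_closedBall) ?_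
      exact Fm_anti _ hc.le (biInf_mono fun y hy => closedBall_subset_ball (by linarith) hy)
    exact hspl.trans (sup_le_sup hu1 le_rfl)
  have hLB : ∀ lam : ℝ, 0 < lam →
      (⨅ p : Set.Ioi (0:ℝ), limsup
          (fun m : ℕ => Fm (1/q) (⨅ y ∈ ball x p.1, Im m y)) atTop)
        ≤ liminf (fun ε : ℝ => ((ε ^ 2 : ℝ) : EReal) *
            ENNReal.log (Cap {w | Te ε w ∈ ball x lam})) (𝓝[>] 0) := by
    intro lam hlam
    have h2 : (0:ℝ) < lam/2 := by linarith
    refine le_trans (iInf_le _ ⟨lam/2, Set.mem_Ioi.2 h2⟩) ?_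
    refine limsup_le_of_tendsto_bot
      (v := fun m => limsup (fun ε : ℝ => ((ε ^ 2 : ℝ) : EReal) *
        ENNReal.log (Cap {w | lam/2 < dist (T ε m w) (Te ε w)})) (𝓝[>] 0)) ?_
      (happrox (lam/2) h2)
    intro m
    have hincl : ∀ ε : ℝ, {w | T ε m w ∈ ball x (lam/2)} ⊆
        {w | Te ε w ∈ ball x lam} ∪ {w | lam/2 < dist (T ε m w) (Te ε w)} := by
      intro ε w hw
      by_cases hd : lam/2 < dist (T ε m w) (Te ε w)
      · exact Or.inr hd
      · left
        push_neg at hd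
        have h1 : dist (T ε m w) x < lam/2 := hw
        have h2' := dist_triangle (Te ε w) (T ε m w) x
        have h3' : dist (Te ε w) (T ε m w) = dist (T ε m w) (Te ε w) := dist_comm _ _
        show dist (Te ε w) x < lam
        linarith
    have hspl := liminf_eps2log_split Cap hmono hsub hincl
    exact le_trans (hlower m (ball x (lam/2)) isOpen_ball) hspl
  have hA'A : (⨅ l ∈ Set.Ioi (0:ℝ), liminf (fun ε : ℝ => ((ε ^ 2 : ℝ) : EReal) *
        ENNReal.log (Cap {w | Te ε w ∈ ball x l})) (𝓝[>] 0))
      ≤ ⨅ l ∈ Set.Ioi (0:ℝ), limsup (fun ε : ℝ => ((ε ^ 2 : ℝ) : EReal) *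
        ENNReal.log (Cap {w | Te ε w ∈ ball x l})) (𝓝[>] 0) :=
    iInf_mono fun _ => iInf_mono fun _ => liminf_le_limsup
  have hVlow : (-(((1 / q : ℝ) : EReal) *
      ((⨆ lam ∈ Set.Ioi (0 : ℝ),
        liminf (fun m : ℕ => ⨅ y ∈ ball x lam, Im m y) atTop : ℝ≥0∞) : EReal)))
      ≤ ⨅ l ∈ Set.Ioi (0:ℝ), liminf (fun ε : ℝ => ((ε ^ 2 : ℝ) : EReal) *
          ENNReal.log (Cap {w | Te ε w ∈ ball x l})) (𝓝[>] 0) := by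
    refine le_iInf₂ fun l hl => ?_
    rw [hV]
    exact hLB l (Set.mem_Ioi.1 hl)
  have hup : (⨅ l ∈ Set.Ioi (0:ℝ), limsup (fun ε : ℝ => ((ε ^ 2 : ℝ) : EReal) *
        ENNReal.log (Cap {w | Te ε w ∈ ball x l})) (𝓝[>] 0))
      ≤ (-(((1 / q : ℝ) : EReal) *
        ((⨆ lam ∈ Set.Ioi (0 : ℝ),
          liminf (fun m : ℕ => ⨅ y ∈ ball x lam, Im m y) atTop : ℝ≥0∞) : EReal))) := by
    rw [hV]
    exact le_iInf fun p => hUB p.1 (Set.mem_Ioi.1 p.2)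
  exact ⟨le_antisymm (hVlow.trans hA'A) hup, le_antisymm hVlow (hA'A.trans hup)⟩
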